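/- If two adjacent haplotypes in a list of strings differ, then in the Positional Burrows–Wheeler Transform of the list, the total number of runs across all columns is at least h'' + 1, where h'' is the number of indices i with S_i ≠ S_{i+1}. -/

import Mathlib

namespace PBWT

/-- The reversed prefix of length `j` (truncated at `w`) of haplotype `i`:
used to express the co-lexicographic order of prefixes. -/
def revPrefix {h w : ℕ} (S : Fin h → Fin w → ℕ) (j : ℕ) (i : Fin h) : List ℕ :=
  ((List.range j).filterMap (fun t => if ht : t < w then some (S i ⟨t, ht⟩) else none)).reverse

/-- `PA` is the stable sort of the haplotype indices by the co-lexicographic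
order of their prefixes of length `j` (ties broken by original index). -/
def IsStableSort {h w : ℕ} (S : Fin h → Fin w → ℕ) (j : ℕ) (PA : Fin h ≃ Fin h) : Prop :=
  ∀ a b : Fin h, a < b →
    List.Lex (· < ·) (revPrefix S j (PA a)) (revPrefix S j (PA b)) ∨
      (revPrefix S j (PA a) = revPrefix S j (PA b) ∧ (PA a).val < (PA b).val)

/-- Number of maximal runs of equal adjacent values in the sequence `f`. -/
def runCount {α : Type*} [DecidableEq α] {n : ℕ} (f : Fin n → α) : ℕ :=
  ((List.ofFn f).destutter (· ≠ ·)).length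

/-- `h''`: the number of indices `i` with `S i ≠ S (i+1)`. -/
noncomputable def adjDiff {h w : ℕ} (S : Fin h → Fin w → ℕ) : ℕ :=
  Nat.card {i : Fin h // ∃ h1 : (i : ℕ) + 1 < h, S i ≠ S ⟨(i : ℕ) + 1, h1⟩}

/-! ### Auxiliary lemmas -/

lemma main_count {α : Type*} [DecidableEq α] (n : ℕ) : ∀ (g : ℕ → α),
    (List.destutter' (· ≠ ·) (g 0) (List.ofFn (fun i : Fin n => g (i + 1)))).length =
      1 + ((List.range n).filter (fun t => g t ≠ g (t + 1))).length := by
  induction n with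
  | zero => intro g; simp
  | succ n ih =>
    intro g
    have hof : List.ofFn (fun i : Fin (n+1) => g (i + 1)) =
        g 1 :: List.ofFn (fun i : Fin n => g (i + 1 + 1)) := by
      rw [List.ofFn_succ]; simp
    have ih' := ih (fun t => g (t + 1))
    simp only [Nat.zero_add] at ih'
    have hpq : ((fun t => decide (g t ≠ g (t+1))) ∘ Nat.succ) =
        (fun t => decide (g (t+1) ≠ g (t+1+1))) := by
      funext t; simp [Function.comp, Nat.succ_eq_add_one]
    have hrange : ((List.range (n+1)).filter (fun t => g t ≠ g (t+1))).length =
        (if g 0 = g 1 then 0 else 1) +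
          ((List.range n).filter (fun t => g (t+1) ≠ g (t+1+1))).length := by
      rw [List.range_succ_eq_map, List.filter_cons, List.filter_map, hpq]
      split_ifs with hh <;> simp_all <;> omega
    rw [hof, List.destutter'_cons, hrange]
    by_cases h01 : g 0 = g 1
    · rw [if_neg (by simp [h01]), if_pos h01, h01]
      simpa using ih'
    · rw [if_pos (by simp [h01]), if_neg h01]
      simp only [List.length_cons]
      rw [ih']
      omega

lemma runCount_eq {α : Type*} [DecidableEq α] (n : ℕ) (g : ℕ → α) :
    runCount (fun i : Fin (n+1) => g i) =
      1 + ((List.range n).filter (fun t => g t ≠ g (t + 1))).length := by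
  unfold runCount
  rw [List.ofFn_succ, List.destutter_cons']
  simp only [Fin.val_succ, Fin.val_zero]
  exact main_count n g

def gcol {h w : ℕ} (S : Fin h → Fin w → ℕ) (PA : Fin w → Fin h ≃ Fin h) (j : Fin w) (t : ℕ) : ℕ :=
  if ht : t < h then S (PA j ⟨t, ht⟩) j else 0

lemma gcol_lt {h w : ℕ} (S : Fin h → Fin w → ℕ) (PA : Fin w → Fin h ≃ Fin h) (j : Fin w)
    {t : ℕ} (ht : t < h) : gcol S PA j t = S (PA j ⟨t, ht⟩) j := dif_pos ht

lemma lex_irrefl (L : List ℕ) : ¬ List.Lex (· < ·) L L := fun hL => asymm hL hL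


theorem stmt0 (h w : ℕ) (S : Fin h → Fin w → ℕ) (PA : Fin w → Fin h ≃ Fin h)
    (hPA : ∀ j : Fin w, IsStableSort S (j : ℕ) (PA j))
    (hdiff : ∃ i : Fin h, ∃ h1 : (i : ℕ) + 1 < h, S i ≠ S ⟨(i : ℕ) + 1, h1⟩) :
    adjDiff S + 1 ≤ ∑ j : Fin w, runCount (fun i : Fin h => S (PA j i) j) := by
  classical
  obtain ⟨i0, hi0, hne0⟩ := hdiff
  have hw : 0 < w := by
    by_contra hw
    push_neg at hw
    exact hne0 (funext fun t => absurd t.isLt (by omega))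
  obtain ⟨m, rfl⟩ : ∃ m, h = m + 1 := ⟨h - 1, by omega⟩
  set Bf : Fin w → Finset ℕ :=
    fun j => (Finset.range m).filter (fun t => gcol S PA j t ≠ gcol S PA j (t+1)) with hBf
  -- each column's run count
  have hrc : ∀ j : Fin w, runCount (fun i : Fin (m+1) => S (PA j i) j) = 1 + (Bf j).card := by
    intro j
    have hcol : (fun i : Fin (m+1) => S (PA j i) j) =
        (fun i : Fin (m+1) => gcol S PA j i) := by
      funext i; rw [gcol_lt S PA j i.isLt, Fin.eta]
    rw [hcol, runCount_eq m (gcol S PA j)]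
    rfl
  -- key adjacency claim
  have key : ∀ i : Fin (m+1), ∀ h1 : (i : ℕ) + 1 < m + 1, S i ≠ S ⟨(i : ℕ) + 1, h1⟩ →
      ∃ j : Fin w, (((PA j).symm i : Fin (m+1)) : ℕ) ∈ Bf j := by
    intro i h1 hne
    set i2 : Fin (m+1) := ⟨(i : ℕ) + 1, h1⟩ with hi2
    obtain ⟨a, ha⟩ := Function.ne_iff.mp hne
    have hQ : ∃ n : ℕ, ∃ hn : n < w, S i ⟨n, hn⟩ ≠ S i2 ⟨n, hn⟩ := ⟨a, a.isLt, by simpa using ha⟩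
    obtain ⟨hjw, hjne⟩ := Nat.find_spec hQ
    set j : Fin w := ⟨Nat.find hQ, hjw⟩ with hj
    have hpre : revPrefix S (j : ℕ) i = revPrefix S (j : ℕ) i2 := by
      unfold revPrefix
      refine congrArg List.reverse (List.filterMap_congr ?_)
      intro t ht
      rw [List.mem_range] at ht
      have hmin := Nat.find_min hQ ht
      push_neg at hmin
      split_ifs with htw
      · rw [hmin htw]
      · rfl
    have hpi : PA j ((PA j).symm i) = i := Equiv.apply_symm_apply _ _
    have hqi : PA j ((PA j).symm i2) = i2 := Equiv.apply_symm_apply _ _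
    set p := (PA j).symm i with hp
    set q := (PA j).symm i2 with hq
    have hne' : p ≠ q := by
      intro hpq
      have : i = i2 := by rw [← hpi, ← hqi, hpq]
      have := congrArg Fin.val this
      simp [hi2] at this
    have hplq : p < q := by
      rcases lt_trichotomy p q with hlt | heq | hgt
      · exact hlt
      · exact absurd heq hne'
      · rcases hPA j q p hgt with hlex | ⟨-, hvv⟩
        · rw [hpi, hqi] at hlex
          rw [hpre] at hlex
          exact absurd hlex (lex_irrefl _)
        · rw [hpi, hqi] at hvv
          have : (i2 : ℕ) = (i : ℕ) + 1 := rfl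
          omega
    have hq1 : (q : ℕ) = (p : ℕ) + 1 := by
      by_contra hq1
      have hlt : (p : ℕ) + 1 < (q : ℕ) := by
        have := Fin.lt_def.mp hplq; omega
      set mm : Fin (m+1) := ⟨(p : ℕ) + 1, lt_trans hlt q.isLt⟩ with hmm
      have h1' : p < mm := by simp [Fin.lt_def, hmm]
      have h2' : mm < q := by simpa [Fin.lt_def, hmm] using hlt
      have c1 := hPA j p mm h1'
      have c2 := hPA j mm q h2'
      rw [hpi, hpre] at c1
      rw [hqi] at c2
      rcases c1 with c1l | ⟨c1e, c1v⟩ <;> rcases c2 with c2l | ⟨c2e, c2v⟩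
      · exact absurd c2l (asymm c1l)
      · rw [c2e] at c1l
        exact absurd c1l (lex_irrefl _)
      · rw [← c1e] at c2l
        exact absurd c2l (lex_irrefl _)
      · have : (i2 : ℕ) = (i : ℕ) + 1 := rfl
        omega
    refine ⟨j, ?_⟩
    rw [hBf]
    simp only [Finset.mem_filter, Finset.mem_range]
    constructor
    · have := q.isLt; omega
    · have hgp : gcol S PA j (p : ℕ) = S i j := by
        rw [gcol_lt S PA j p.isLt, Fin.eta, hpi]
      have hgq : gcol S PA j ((p : ℕ) + 1) = S i2 j := by
        have hlt2 : (p : ℕ) + 1 < m + 1 := by rw [← hq1]; exact q.isLt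
        rw [gcol_lt S PA j hlt2]
        have : (⟨(p : ℕ) + 1, hlt2⟩ : Fin (m+1)) = q := Fin.ext hq1.symm
        rw [this, hqi]
      rw [hgp, hgq]
      exact fun hc => hjne hc
  -- counting
  set D : Finset (Fin (m+1)) :=
    Finset.univ.filter (fun i : Fin (m+1) => ∃ h1 : (i : ℕ) + 1 < m + 1,
      S i ≠ S ⟨(i : ℕ) + 1, h1⟩) with hD
  have hadj : adjDiff S = D.card := by
    rw [adjDiff, Nat.card_eq_fintype_card, hD]
    convert Fintype.card_subtype _
  have hcard : D.card ≤ ∑ j : Fin w, (Bf j).card := by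
    rw [← Finset.card_sigma]
    have hwne : (0 : ℕ) < w := hw
    set f : Fin (m+1) → (Σ _ : Fin w, ℕ) := fun i =>
      if hi : ∃ h1 : (i : ℕ) + 1 < m + 1, S i ≠ S ⟨(i : ℕ) + 1, h1⟩ then
        ⟨(key i hi.choose hi.choose_spec).choose,
          (((PA (key i hi.choose hi.choose_spec).choose).symm i : Fin (m+1)) : ℕ)⟩
      else ⟨⟨0, hwne⟩, 0⟩ with hf
    apply Finset.card_le_card_of_injOn f
    · intro i hi
      rw [hD, Finset.mem_coe, Finset.mem_filter] at hi
      obtain ⟨-, hi⟩ := hi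
      rw [hf]
      simp only [dif_pos hi]
      rw [Finset.mem_coe, Finset.mem_sigma]
      exact ⟨Finset.mem_univ _, (key i hi.choose hi.choose_spec).choose_spec⟩
    · intro i hi i' hi' heq
      rw [hD, Finset.mem_coe, Finset.mem_filter] at hi hi'
      obtain ⟨-, hi⟩ := hi
      obtain ⟨-, hi'⟩ := hi'
      rw [hf] at heq
      simp only [dif_pos hi, dif_pos hi'] at heq
      obtain ⟨hfst, hsnd⟩ := Sigma.mk.inj_iff.mp heq
      have hsnd' := eq_of_heq hsnd
      rw [← hfst] at hsnd'
      have := Fin.val_injective hsnd'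
      exact (PA _).symm.injective this
  -- assemble
  have hsum : ∑ j : Fin w, runCount (fun i : Fin (m+1) => S (PA j i) j) =
      w + ∑ j : Fin w, (Bf j).card := by
    rw [Finset.sum_congr rfl (fun j _ => hrc j), Finset.sum_add_distrib]
    simp
  rw [hsum, hadj]
  omega


end PBWT
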